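/- Let U₁, U₂ : ℝ → ℝ be twice continuously differentiable with Uᵢ' > 0 and suppose -U₂''(x)/U₂'(x) ≥ -U₁''(x)/U₁'(x) for all x. Then U₂'(x)/U₂'(w) ≤ U₁'(x)/U₁'(w) for all w < x, and U₂'(x)/U₂'(y) ≥ U₁'(x)/U₁'(y) for all x < y. -/

import Mathlib

/-- Pratt's inequality (20): comparison of ratios of marginal utilities. -/
theorem pratt_marginal_utility_ratios
    (U₁ U₂ : ℝ → ℝ)
    (hC1 : ContDiff ℝ 2 U₁) (hC2 : ContDiff ℝ 2 U₂)
    (hd1 : ∀ x, 0 < deriv U₁ x) (hd2 : ∀ x, 0 < deriv U₂ x)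
    (hidx : ∀ x, -(deriv (deriv U₂) x) / deriv U₂ x ≥
      -(deriv (deriv U₁) x) / deriv U₁ x) :
    (∀ w x : ℝ, w < x → deriv U₂ x / deriv U₂ w ≤ deriv U₁ x / deriv U₁ w) ∧
    (∀ x y : ℝ, x < y → deriv U₂ x / deriv U₂ y ≥ deriv U₁ x / deriv U₁ y) := by
  have hC1' : ContDiff ℝ (1 + 1) U₁ := by rw [one_add_one_eq_two]; exact hC1
  have hC2' : ContDiff ℝ (1 + 1) U₂ := by rw [one_add_one_eq_two]; exact hC2
  have hf1 : Differentiable ℝ (deriv U₁) :=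
    ((contDiff_succ_iff_deriv.mp hC1').2.2).differentiable one_ne_zero
  have hf2 : Differentiable ℝ (deriv U₂) :=
    ((contDiff_succ_iff_deriv.mp hC2').2.2).differentiable one_ne_zero
  set g : ℝ → ℝ := fun x => Real.log (deriv U₂ x) - Real.log (deriv U₁ x) with hg
  have hgd : ∀ x, HasDerivAt g
      (deriv (deriv U₂) x / deriv U₂ x - deriv (deriv U₁) x / deriv U₁ x) x := by
    intro x
    have h1 : HasDerivAt (fun x => Real.log (deriv U₁ x))
        ((deriv U₁ x)⁻¹ * deriv (deriv U₁) x) x :=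
      (Real.hasDerivAt_log (hd1 x).ne').comp x (hf1 x).hasDerivAt
    have h2' : HasDerivAt (fun x => Real.log (deriv U₂ x))
        ((deriv U₂ x)⁻¹ * deriv (deriv U₂) x) x :=
      (Real.hasDerivAt_log (hd2 x).ne').comp x (hf2 x).hasDerivAt
    have := h2'.sub h1
    exact this.congr_deriv (by ring)
  have hanti : Antitone g := by
    apply antitone_of_deriv_nonpos
    · exact fun x => (hgd x).differentiableAt
    · intro x
      rw [(hgd x).deriv]
      have := hidx x
      rw [ge_iff_le, neg_div, neg_div, neg_le_neg_iff] at this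
      linarith
  have key : ∀ a b : ℝ, a ≤ b →
      deriv U₂ b * deriv U₁ a ≤ deriv U₂ a * deriv U₁ b := by
    intro a b hab
    have := hanti hab
    simp only [hg] at this
    have hlog : Real.log (deriv U₂ b * deriv U₁ a) ≤ Real.log (deriv U₂ a * deriv U₁ b) := by
      rw [Real.log_mul (hd2 b).ne' (hd1 a).ne', Real.log_mul (hd2 a).ne' (hd1 b).ne']
      linarith
    exact (Real.log_le_log_iff (mul_pos (hd2 b) (hd1 a)) (mul_pos (hd2 a) (hd1 b))).mp hlog
  constructor
  · intro w x hwx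
    rw [div_le_div_iff₀ (hd2 w) (hd1 w)]
    linarith [key w x hwx.le]
  · intro x y hxy
    rw [ge_iff_le, div_le_div_iff₀ (hd1 y) (hd2 y)]
    linarith [key x y hxy.le]
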